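/- Assume Q is W-geometrically ergodic: there exist C ≥ 0 and κ₀ < 1 such that ‖Q^n f − ν(f)𝟏‖_W ≤ C κ₀^n ‖f‖_W for all n ≥ 1 and all f with ‖f‖_W < ∞, where ν is a Q-invariant probability measure with ν(W) < ∞. Define the kernel Q̃(x,dy) = W(x)^{−1} W(y) Q(x,dy) and the probability measure ν̃(A) = ν(W·1_A)/ν(W). Then there exists an integer ℓ ≥ 1 such that for every A ∈ ℰ with ν̃(A) ≤ 1/(4ν(W)) and every x ∈ E one has (Q̃)^ℓ(x,A) ≤ 3/4. -/

import Mathlib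

open MeasureTheory ENNReal

theorem iSup_min_nat (a : ℝ≥0∞) (ha : a ≠ ⊤) : ⨆ m : ℕ, min a m = a := by
  apply le_antisymm (iSup_le fun m => min_le_left _ _)
  have h : a ≤ (⌈a.toReal⌉₊ : ℝ≥0∞) :=
    le_trans (le_of_eq (ENNReal.ofReal_toReal ha).symm)
      (by rw [← ENNReal.ofReal_natCast]; exact ENNReal.ofReal_le_ofReal (Nat.le_ceil _))
  calc a = min a (⌈a.toReal⌉₊ : ℝ≥0∞) := (min_eq_left h).symm
  _ ≤ _ := le_iSup (fun m : ℕ => min a m) _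

theorem integral_cplx_ofReal {E : Type*} [MeasurableSpace E] (μ : Measure E) (f : E → ℝ) :
    ∫ y, ((f y : ℝ) : ℂ) ∂μ = ((∫ y, f y ∂μ : ℝ) : ℂ) :=
  integral_ofReal (𝕜 := ℂ) (f := f)

/-- The appendix estimate of the paper: for a `W`-geometrically ergodic kernel, there is
`ℓ ≥ 1` such that `ν̃(A) ≤ 1/(4ν(W))` implies `(Q̃)^ℓ(x,A) ≤ 3/4` for every `x`, where
`(Q̃)^ℓ(x,A) = W(x)⁻¹ (Q^ℓ(W·1_A))(x)` and `ν̃(A) = ν(W·1_A)/ν(W)`. -/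
theorem stmt_16
    {E : Type*} [MeasurableSpace E]
    (Q : ProbabilityTheory.Kernel E E) [ProbabilityTheory.IsMarkovKernel Q]
    (W : E → ℝ) (hWmeas : Measurable W) (hW1 : ∀ x, 1 ≤ W x)
    -- the operator `Q` acting on complex functions, and on `ℝ≥0∞`-valued functions
    (Qop : (E → ℂ) → E → ℂ) (hQop : ∀ f x, Qop f x = ∫ y, f y ∂(Q x))
    (QopL : (E → ℝ≥0∞) → E → ℝ≥0∞) (hQopL : ∀ f x, QopL f x = ∫⁻ y, f y ∂(Q x))
    -- the weighted norm `‖·‖_W`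
    (normW : (E → ℂ) → ℝ≥0∞)
    (hnormW : ∀ h, normW h = ⨆ x : E, (‖h x‖₊ : ℝ≥0∞) / ENNReal.ofReal (W x))
    -- the invariant probability measure with `ν(W) < ∞`
    (ν : Measure E) [IsProbabilityMeasure ν]
    (hinv : ν.bind (fun x => Q x) = ν) (hνW : Integrable W ν)
    -- `W`-geometric ergodicity
    (C κ₀ : ℝ) (hC : 0 ≤ C) (hκ₀0 : 0 ≤ κ₀) (hκ₀1 : κ₀ < 1)
    (herg : ∀ n : ℕ, 1 ≤ n → ∀ f : E → ℂ, Measurable f → normW f ≠ ⊤ →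
      normW (fun x => Qop^[n] f x - ∫ y, f y ∂ν) ≤ ENNReal.ofReal (C * κ₀ ^ n) * normW f) :
    ∃ l : ℕ, 1 ≤ l ∧ ∀ A : Set E, MeasurableSet A →
      (∫ y in A, W y ∂ν) / (∫ y, W y ∂ν) ≤ 1 / (4 * ∫ y, W y ∂ν) →
      ∀ x : E, (ENNReal.ofReal (W x))⁻¹ *
          QopL^[l] (fun y => ENNReal.ofReal (W y) * A.indicator (fun _ => 1) y) x
        ≤ 3 / 4 := by
  -- choose l with 1 ≤ l and C * κ₀^l ≤ 1/2
  obtain ⟨n, hn⟩ : ∃ n : ℕ, κ₀ ^ n < 1 / (2 * (C + 1)) :=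
    exists_pow_lt_of_lt_one (by positivity) hκ₀1
  set l : ℕ := max n 1 with hl
  have hl1 : 1 ≤ l := le_max_right _ _
  have hCl : C * κ₀ ^ l ≤ 1 / 2 := by
    have h1 : κ₀ ^ l ≤ κ₀ ^ n := pow_le_pow_of_le_one hκ₀0 hκ₀1.le (le_max_left _ _)
    have h2 : C * κ₀ ^ l ≤ (C + 1) * (1 / (2 * (C + 1))) := by
      apply mul_le_mul (by linarith) (h1.trans hn.le) (by positivity) (by linarith)
    have h3 : (C + 1) * (1 / (2 * (C + 1))) = 1 / 2 := by
      field_simp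
    linarith [h2, h3.le]
  refine ⟨l, hl1, fun A hA hAsmall x => ?_⟩
  -- basic facts
  have hW0 : ∀ y, (0:ℝ) < W y := fun y => lt_of_lt_of_le one_pos (hW1 y)
  have hνWpos : (0:ℝ) < ∫ y, W y ∂ν := by
    have : (1:ℝ) = ∫ _, (1:ℝ) ∂ν := by simp
    calc (0:ℝ) < 1 := one_pos
    _ = ∫ _, (1:ℝ) ∂ν := this
    _ ≤ ∫ y, W y ∂ν := integral_mono (integrable_const 1) hνW hW1
  -- ν(W·1_A) ≤ 1/4
  have hA14 : ∫ y in A, W y ∂ν ≤ 1 / 4 := by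
    have h := hAsmall
    rw [div_le_div_iff₀ hνWpos (by positivity)] at h
    nlinarith [hνWpos]
  -- the truncated functions
  set g : E → ℝ≥0∞ := fun y => ENNReal.ofReal (W y) * A.indicator (fun _ => 1) y with hg
  set gm : ℕ → E → ℝ≥0∞ :=
    fun m y => min (ENNReal.ofReal (W y)) m * A.indicator (fun _ => 1) y with hgm
  have hgm_meas : ∀ m, Measurable (gm m) := by
    intro m
    exact ((ENNReal.measurable_ofReal.comp hWmeas).min measurable_const).mul
      (measurable_const.indicator hA)
  have hind_le1 : ∀ y, A.indicator (fun _ => (1:ℝ≥0∞)) y ≤ 1 := by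
    intro y; by_cases hy : y ∈ A <;> simp [Set.indicator_apply, hy]
  have hgm_le : ∀ m y, gm m y ≤ (m : ℝ≥0∞) :=
    fun m y => le_trans (mul_le_mul' (min_le_right _ _) (hind_le1 y)) (by simp)
  have hgm_ne_top : ∀ m y, gm m y ≠ ⊤ := fun m y => (lt_of_le_of_lt (hgm_le m y)
    (by simp [lt_top_iff_ne_top])).ne
  have hgm_le_W : ∀ m y, gm m y ≤ ENNReal.ofReal (W y) :=
    fun m y => le_trans (mul_le_mul' (min_le_left _ _) (hind_le1 y)) (by simp)
  have hgm_mono : Monotone gm := by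
    intro m m' hmm' y
    exact mul_le_mul' (min_le_min le_rfl (by exact_mod_cast Nat.cast_le.mpr hmm')) le_rfl
  have hgm_sup : ∀ y, (⨆ m, gm m y) = g y := by
    intro y
    rw [hg, hgm]
    simp only
    rw [← ENNReal.iSup_mul]
    congr 1
    exact iSup_min_nat _ ENNReal.ofReal_ne_top
  -- iterated monotone operator facts
  have hQopL_mono : Monotone QopL := by
    intro f1 f2 h12 x
    rw [hQopL, hQopL]
    exact lintegral_mono h12
  have hiter_mono : ∀ k, Monotone (QopL^[k]) := fun k => hQopL_mono.iterate k
  -- key induction: measurability, boundedness, and relation to the complex operator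
  set fm : ℕ → E → ℂ := fun m y => ((gm m y).toReal : ℂ) with hfm
  have hfm_meas : ∀ m, Measurable (fm m) :=
    fun m => Complex.measurable_ofReal.comp (ENNReal.measurable_toReal.comp (hgm_meas m))
  have key : ∀ k m, Measurable (QopL^[k] (gm m)) ∧ (∀ x, QopL^[k] (gm m) x ≤ (m:ℝ≥0∞)) ∧
      (∀ x, Qop^[k] (fm m) x = ((QopL^[k] (gm m) x).toReal : ℂ)) := by
    intro k m
    induction k with
    | zero => exact ⟨hgm_meas m, hgm_le m, fun x => rfl⟩
    | succ k ih =>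
      obtain ⟨ihm, ihb, ihe⟩ := ih
      have hne : ∀ y, QopL^[k] (gm m) y ≠ ⊤ :=
        fun y => (lt_of_le_of_lt (ihb y) (by simp [lt_top_iff_ne_top])).ne
      refine ⟨?_, ?_, ?_⟩
      · rw [Function.iterate_succ_apply']
        have : (fun x => ∫⁻ y, QopL^[k] (gm m) y ∂(Q x)) = QopL (QopL^[k] (gm m)) := by
          ext x; rw [hQopL]
        rw [← this]
        exact ihm.lintegral_kernel
      · intro x
        rw [Function.iterate_succ_apply', hQopL]
        calc ∫⁻ y, QopL^[k] (gm m) y ∂(Q x) ≤ ∫⁻ _, (m:ℝ≥0∞) ∂(Q x) := lintegral_mono ihb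
        _ = (m:ℝ≥0∞) := by simp
      · intro x
        rw [Function.iterate_succ_apply', Function.iterate_succ_apply', hQop]
        have h1 : (fun y => Qop^[k] (fm m) y) = fun y => ((QopL^[k] (gm m) y).toReal : ℂ) := by
          ext y; exact ihe y
        rw [h1]
        rw [integral_cplx_ofReal]
        rw [integral_toReal (ihm.aemeasurable) (Filter.Eventually.of_forall fun y =>
          lt_of_le_of_lt (ihb y) (by simp [lt_top_iff_ne_top]))]
        rw [hQopL]
  -- monotone convergence through the iterates
  have hsup : ∀ k x, QopL^[k] g x = ⨆ m, QopL^[k] (gm m) x := by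
    intro k
    induction k with
    | zero =>
      intro x
      simp only [Function.iterate_zero, id_eq]
      exact (hgm_sup x).symm
    | succ k ih =>
      intro x
      rw [Function.iterate_succ_apply', hQopL]
      have h1 : ∀ y, QopL^[k] g y = ⨆ m, QopL^[k] (gm m) y := ih
      calc ∫⁻ y, QopL^[k] g y ∂(Q x) = ∫⁻ y, ⨆ m, QopL^[k] (gm m) y ∂(Q x) := by
            apply lintegral_congr; exact h1
      _ = ⨆ m, ∫⁻ y, QopL^[k] (gm m) y ∂(Q x) :=
            lintegral_iSup (fun m => (key k m).1)
              (fun m m' hmm' y => hiter_mono k (hgm_mono hmm') y)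
      _ = ⨆ m, QopL^[k+1] (gm m) x := by
            apply iSup_congr
            intro m
            rw [Function.iterate_succ_apply', hQopL]
  -- bound the norm of fm
  have hfm_normW : ∀ m, normW (fm m) ≤ 1 := by
    intro m
    rw [hnormW]
    apply iSup_le
    intro y
    have h1 : (‖fm m y‖₊ : ℝ≥0∞) = gm m y := by
      have : ‖fm m y‖ = (gm m y).toReal := by
        rw [hfm]; simp [abs_of_nonneg ENNReal.toReal_nonneg]
      rw [← enorm_eq_nnnorm, ← ofReal_norm, this, ENNReal.ofReal_toReal (hgm_ne_top m y)]
    rw [h1]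
    rw [ENNReal.div_le_iff (by simp [hW0 y]) ENNReal.ofReal_ne_top]
    simpa using hgm_le_W m y
  have hfm_normW_ne_top : ∀ m, normW (fm m) ≠ ⊤ :=
    fun m => (lt_of_le_of_lt (hfm_normW m) (by simp)).ne
  -- the integral of fm against ν
  have hgm_int : ∀ m, Integrable (fun y => (gm m y).toReal) ν := by
    intro m
    apply Integrable.mono' (integrable_const (m : ℝ))
      (ENNReal.measurable_toReal.comp (hgm_meas m)).aestronglyMeasurable
    apply Filter.Eventually.of_forall
    intro y
    simp only [Function.comp_apply]
    rw [Real.norm_of_nonneg ENNReal.toReal_nonneg]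
    exact ENNReal.toReal_le_of_le_ofReal (by positivity) (by
      rw [ENNReal.ofReal_natCast]; exact hgm_le m y)
  have hνfm : ∀ m, ∫ y, fm m y ∂ν = ((∫ y, (gm m y).toReal ∂ν : ℝ) : ℂ) := by
    intro m
    rw [hfm]
    exact integral_cplx_ofReal ν _
  have hνfm_le : ∀ m, ∫ y, (gm m y).toReal ∂ν ≤ 1 / 4 := by
    intro m
    calc ∫ y, (gm m y).toReal ∂ν ≤ ∫ y, A.indicator W y ∂ν := by
          apply integral_mono (hgm_int m) (hνW.indicator hA)
          intro y
          have h2 : (gm m y).toReal ≤ (ENNReal.ofReal (W y) * A.indicator (fun _ => 1) y).toReal := by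
            apply ENNReal.toReal_mono
            · by_cases hy : y ∈ A <;> simp [Set.indicator_apply, hy, ENNReal.ofReal_ne_top]
            · exact mul_le_mul' (min_le_left _ _) le_rfl
          refine h2.trans (le_of_eq ?_)
          by_cases hy : y ∈ A <;>
            simp [Set.indicator_apply, hy, ENNReal.toReal_ofReal (hW0 y).le]
    _ = ∫ y in A, W y ∂ν := by
          rw [integral_indicator hA]
    _ ≤ 1 / 4 := hA14
  -- the ergodicity bound at time l
  have hkey : ∀ m, (QopL^[l] (gm m) x).toReal ≤ 1 / 4 + C * κ₀ ^ l * W x := by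
    intro m
    have H := herg l hl1 (fm m) (hfm_meas m) (hfm_normW_ne_top m)
    have H2 : normW (fun z => Qop^[l] (fm m) z - ∫ y, fm m y ∂ν) ≤
        ENNReal.ofReal (C * κ₀ ^ l) := by
      calc normW (fun z => Qop^[l] (fm m) z - ∫ y, fm m y ∂ν)
          ≤ ENNReal.ofReal (C * κ₀ ^ l) * normW (fm m) := H
      _ ≤ ENNReal.ofReal (C * κ₀ ^ l) * 1 := mul_le_mul' le_rfl (hfm_normW m)
      _ = ENNReal.ofReal (C * κ₀ ^ l) := mul_one _
    have H3 : (‖Qop^[l] (fm m) x - ∫ y, fm m y ∂ν‖₊ : ℝ≥0∞) / ENNReal.ofReal (W x) ≤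
        ENNReal.ofReal (C * κ₀ ^ l) := by
      refine le_trans ?_ H2
      rw [hnormW]
      exact le_iSup (fun z => (‖Qop^[l] (fm m) z - ∫ y, fm m y ∂ν‖₊ : ℝ≥0∞) /
        ENNReal.ofReal (W z)) x
    have H4 : (‖Qop^[l] (fm m) x - ∫ y, fm m y ∂ν‖₊ : ℝ≥0∞) ≤
        ENNReal.ofReal (C * κ₀ ^ l) * ENNReal.ofReal (W x) := by
      calc (‖Qop^[l] (fm m) x - ∫ y, fm m y ∂ν‖₊ : ℝ≥0∞)
          = (‖Qop^[l] (fm m) x - ∫ y, fm m y ∂ν‖₊ : ℝ≥0∞) / ENNReal.ofReal (W x) *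
            ENNReal.ofReal (W x) := (ENNReal.div_mul_cancel (by simp [hW0 x])
              ENNReal.ofReal_ne_top).symm
      _ ≤ _ := mul_le_mul_left H3 _
    have H5 : ‖Qop^[l] (fm m) x - ∫ y, fm m y ∂ν‖ ≤ C * κ₀ ^ l * W x := by
      rw [← enorm_eq_nnnorm, ← ofReal_norm,
        ← ENNReal.ofReal_mul (mul_nonneg hC (pow_nonneg hκ₀0 l))] at H4
      exact (ENNReal.ofReal_le_ofReal_iff
        (mul_nonneg (mul_nonneg hC (pow_nonneg hκ₀0 l)) (hW0 x).le)).mp H4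
    set t : ℝ := (QopL^[l] (gm m) x).toReal with ht
    set s : ℝ := ∫ y, (gm m y).toReal ∂ν with hs
    have H6 : Qop^[l] (fm m) x - ∫ y, fm m y ∂ν = ((t - s : ℝ) : ℂ) := by
      rw [(key l m).2.2 x, hνfm m]
      push_cast
      ring
    rw [H6] at H5
    rw [Complex.norm_real] at H5
    have H7 : t - s ≤ C * κ₀ ^ l * W x := (le_abs_self _).trans H5
    have := hνfm_le m
    linarith
  -- put everything together
  have hne : ∀ m, QopL^[l] (gm m) x ≠ ⊤ := fun m =>
    (lt_of_le_of_lt ((key l m).2.1 x) (by simp [lt_top_iff_ne_top])).ne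
  have hbound : QopL^[l] g x ≤ ENNReal.ofReal ((3 / 4) * W x) := by
    rw [hsup l x]
    apply iSup_le
    intro m
    have h1 : QopL^[l] (gm m) x = ENNReal.ofReal ((QopL^[l] (gm m) x).toReal) :=
      (ENNReal.ofReal_toReal (hne m)).symm
    rw [h1]
    apply ENNReal.ofReal_le_ofReal
    have h2 := hkey m
    have h3 : (1:ℝ) / 4 + C * κ₀ ^ l * W x ≤ (3 / 4) * W x := by
      have h4 : (1:ℝ) / 4 ≤ (1 / 4) * W x := by nlinarith [hW1 x]
      have h5 : C * κ₀ ^ l * W x ≤ (1 / 2) * W x := by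
        nlinarith [hW1 x, hCl, mul_nonneg hC (pow_nonneg hκ₀0 l)]
      linarith
    linarith
  calc (ENNReal.ofReal (W x))⁻¹ * QopL^[l] g x
      ≤ (ENNReal.ofReal (W x))⁻¹ * ENNReal.ofReal ((3 / 4) * W x) :=
        mul_le_mul' le_rfl hbound
  _ = (ENNReal.ofReal (W x))⁻¹ * (ENNReal.ofReal (3 / 4) * ENNReal.ofReal (W x)) := by
        rw [ENNReal.ofReal_mul (by norm_num)]
  _ = ENNReal.ofReal (3 / 4) * ((ENNReal.ofReal (W x))⁻¹ * ENNReal.ofReal (W x)) := by ring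
  _ = ENNReal.ofReal (3 / 4) := by
        rw [ENNReal.inv_mul_cancel (by simp [hW0 x]) ENNReal.ofReal_ne_top, mul_one]
  _ = 3 / 4 := by
        rw [ENNReal.ofReal_div_of_pos (by norm_num)]
        norm_num
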